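/- Convexity of contour sets of ranking scores: for every real v, each of the five sets {p ∈ dom(R_I) : R_I(p) < v}, {p ∈ dom(R_I) : R_I(p) ≤ v}, {p ∈ dom(R_I) : R_I(p) = v}, {p ∈ dom(R_I) : R_I(p) ≥ v}, and {p ∈ dom(R_I) : R_I(p) > v} is a convex subset of the real vector space of functions Ω → ℝ. -/

import Mathlib

/-- A performance on a finite sample space: nonnegative and summing to one. -/
def IsPerformance {Ω : Type*} [Fintype Ω] (p : Ω → ℝ) : Prop :=
  (∀ ω, 0 ≤ p ω) ∧ ∑ ω, p ω = 1

/-- An importance: nonnegative and nonzero. -/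
def IsImportance {Ω : Type*} [Fintype Ω] (I : Ω → ℝ) : Prop :=
  (∀ ω, 0 ≤ I ω) ∧ ∃ ω, 0 < I ω

/-- The ranking score with importance `I` and satisfaction `S`. -/
noncomputable def rankingScore {Ω : Type*} [Fintype Ω] (I S p : Ω → ℝ) : ℝ :=
  (∑ ω, I ω * S ω * p ω) / (∑ ω, I ω * p ω)

lemma aux_convex {Ω : Type*} [Fintype Ω] (S I : Ω → ℝ)
    (hI : IsImportance I) (v : ℝ) (r : ℝ → ℝ → Prop)
    (h1 : ∀ x d : ℝ, 0 < d → (r (x / d) v ↔ r (x - v * d) 0))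
    (h2 : ∀ x y a b : ℝ, 0 ≤ a → 0 ≤ b → a + b = 1 → r x 0 → r y 0 →
      r (a * x + b * y) 0) :
    Convex ℝ {p : Ω → ℝ | (IsPerformance p ∧ ∑ ω, I ω * p ω ≠ 0) ∧
        r (rankingScore I S p) v} := by
  have hDpos : ∀ p : Ω → ℝ, IsPerformance p → (∑ ω, I ω * p ω ≠ 0) →
      0 < ∑ ω, I ω * p ω := by
    intro p hp hne
    exact lt_of_le_of_ne
      (Finset.sum_nonneg fun ω _ => mul_nonneg (hI.1 ω) (hp.1 ω)) (Ne.symm hne)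
  rintro p ⟨⟨hp, hpne⟩, hrp⟩ q ⟨⟨hq, hqne⟩, hrq⟩ a b ha hb hab
  set z : Ω → ℝ := a • p + b • q with hz
  have hzval : ∀ ω, z ω = a * p ω + b * q ω := fun ω => rfl
  have hperf : IsPerformance z := by
    constructor
    · intro ω
      rw [hzval]
      exact add_nonneg (mul_nonneg ha (hp.1 ω)) (mul_nonneg hb (hq.1 ω))
    · simp only [hzval]
      rw [Finset.sum_add_distrib, ← Finset.mul_sum, ← Finset.mul_sum,
        hp.2, hq.2, mul_one, mul_one, hab]
  have hDz : (∑ ω, I ω * z ω) = a * (∑ ω, I ω * p ω) + b * (∑ ω, I ω * q ω) := by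
    simp only [hzval, Finset.mul_sum]
    rw [← Finset.sum_add_distrib]
    exact Finset.sum_congr rfl fun ω _ => by ring
  have hNz : (∑ ω, I ω * S ω * z ω)
      = a * (∑ ω, I ω * S ω * p ω) + b * (∑ ω, I ω * S ω * q ω) := by
    simp only [hzval, Finset.mul_sum]
    rw [← Finset.sum_add_distrib]
    exact Finset.sum_congr rfl fun ω _ => by ring
  have hDp := hDpos p hp hpne
  have hDq := hDpos q hq hqne
  have hDzpos : 0 < ∑ ω, I ω * z ω := by
    rw [hDz]
    rcases eq_or_lt_of_le ha with h | h
    · have hb1 : b = 1 := by linarith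
      rw [← h, hb1]; simpa using hDq
    · have := mul_pos h hDp
      nlinarith [mul_nonneg hb hDq.le]
  refine ⟨⟨hperf, hDzpos.ne'⟩, ?_⟩
  rw [rankingScore, h1 _ _ hDzpos, hDz, hNz]
  have hp' : r ((∑ ω, I ω * S ω * p ω) - v * (∑ ω, I ω * p ω)) 0 :=
    (h1 _ _ hDp).mp hrp
  have hq' : r ((∑ ω, I ω * S ω * q ω) - v * (∑ ω, I ω * q ω)) 0 :=
    (h1 _ _ hDq).mp hrq
  have := h2 _ _ a b ha hb hab hp' hq'
  convert this using 1
  ring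

lemma neg_comb {x y a b : ℝ} (hx : x < 0) (hy : y < 0) (ha : 0 ≤ a)
    (hb : 0 ≤ b) (hab : a + b = 1) : a * x + b * y < 0 := by
  rcases ha.lt_or_eq with h | h
  · nlinarith
  · rw [← h]; simp; nlinarith

theorem stmt12 {Ω : Type*} [Fintype Ω] [Nonempty Ω] (S I : Ω → ℝ)
    (hI : IsImportance I) (v : ℝ) :
    Convex ℝ {p : Ω → ℝ | (IsPerformance p ∧ ∑ ω, I ω * p ω ≠ 0) ∧
        rankingScore I S p < v} ∧
    Convex ℝ {p : Ω → ℝ | (IsPerformance p ∧ ∑ ω, I ω * p ω ≠ 0) ∧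
        rankingScore I S p ≤ v} ∧
    Convex ℝ {p : Ω → ℝ | (IsPerformance p ∧ ∑ ω, I ω * p ω ≠ 0) ∧
        rankingScore I S p = v} ∧
    Convex ℝ {p : Ω → ℝ | (IsPerformance p ∧ ∑ ω, I ω * p ω ≠ 0) ∧
        v ≤ rankingScore I S p} ∧
    Convex ℝ {p : Ω → ℝ | (IsPerformance p ∧ ∑ ω, I ω * p ω ≠ 0) ∧
        v < rankingScore I S p} := by
  refine ⟨?_, ?_, ?_, ?_, ?_⟩
  · exact aux_convex S I hI v (· < ·)
      (fun x d hd => by show x / d < v ↔ _ < _; rw [div_lt_iff₀ hd]; constructor <;> intro h <;> nlinarith)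
      (fun x y a b ha hb hab hx hy => neg_comb hx hy ha hb hab)
  · exact aux_convex S I hI v (· ≤ ·)
      (fun x d hd => by show x / d ≤ v ↔ _ ≤ _; rw [div_le_iff₀ hd]; constructor <;> intro h <;> nlinarith)
      (fun x y a b ha hb hab hx hy => by nlinarith)
  · exact aux_convex S I hI v (· = ·)
      (fun x d hd => by show x / d = v ↔ _ = _; rw [div_eq_iff hd.ne']; constructor <;> intro h <;> nlinarith)
      (fun x y a b ha hb hab hx hy => by rw [hx, hy]; ring)
  · exact aux_convex S I hI v (fun s t => t ≤ s)
      (fun x d hd => by show v ≤ x / d ↔ _ ≤ _; rw [le_div_iff₀ hd]; constructor <;> intro h <;> nlinarith)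
      (fun x y a b ha hb hab hx hy => by nlinarith)
  · exact aux_convex S I hI v (fun s t => t < s)
      (fun x d hd => by show v < x / d ↔ _ < _; rw [lt_div_iff₀ hd]; constructor <;> intro h <;> nlinarith)
      (fun x y a b ha hb hab hx hy => by have := neg_comb (x:=-x) (y:=-y) (by linarith) (by linarith) ha hb hab; linarith)
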